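/- Let L > 1 and L₂ > 0, and set a_k = 1/(k·L₂·(η(L^k)+1)) for integers k ≥ 1. Then there exists an integer k₁ ≥ 4 such that a_k/a_{k+1} ≤ 2 for every k ≥ k₁, i.e. sup_{k ≥ k₁} a_k/a_{k+1} ≤ 2. -/

import Mathlib

open Set Filter Topology

/-- Hypotheses (P1)–(P3) on `φ(t) = η(t)·t`. -/
def PhiHyp (φ η : ℝ → ℝ) (Lam0 : ℝ) : Prop :=
  (∀ t : ℝ, 0 ≤ t → φ t = η t * t) ∧
  (∀ t : ℝ, 0 ≤ t → 1 ≤ η t) ∧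
  MonotoneOn φ (Set.Ici 0) ∧
  (∀ t₀ : ℝ, 0 < t₀ → ∃ ε > (0 : ℝ), ∃ K : NNReal,
    LipschitzOnWith K φ (Set.Ioo (t₀ - ε) (t₀ + ε))) ∧
  (∀ t : ℝ, 0 ≤ t → t ≤ φ t) ∧
  AntitoneOn η (Set.Ioo 0 1) ∧
  MonotoneOn η (Set.Ici 1) ∧
  (∃ T : ℝ, ∀ t : ℝ, T ≤ t → DifferentiableAt ℝ η t) ∧
  Filter.Tendsto (fun t => t * deriv η t / η t * Real.log (η t)) Filter.atTop (nhds 0) ∧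
  0 < Lam0 ∧
  (∀ s t : ℝ, 0 < s → 0 < t → η (s * t) ≤ Lam0 * η s * η t)

/-- Inequality (3.1): with `a_k = 1/(k·L₂·(η(L^k)+1))`, there is an integer `k₁ ≥ 4`
such that `a_k/a_{k+1} ≤ 2` for every `k ≥ k₁`. -/
theorem statement13 (φ η : ℝ → ℝ) (Lam0 : ℝ) (hφ : PhiHyp φ η Lam0)
    (L L₂ : ℝ) (hL : 1 < L) (hL₂ : 0 < L₂) :
    ∃ k₁ : ℕ, 4 ≤ k₁ ∧ ∀ k : ℕ, k₁ ≤ k →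
      (1 / ((k : ℝ) * L₂ * (η (L ^ k) + 1))) /
        (1 / (((k : ℝ) + 1) * L₂ * (η (L ^ (k + 1)) + 1))) ≤ 2 := by
  obtain ⟨-, hη1, -, -, -, -, -, ⟨T, hT⟩, hlim, -, -⟩ := hφ
  have hL0 : (0:ℝ) < L := lt_trans one_pos hL
  have hlogL : 0 < Real.log L := Real.log_pos hL
  have hc : 0 < Real.log (3/2) := Real.log_pos (by norm_num)
  set c : ℝ := Real.log (3/2) with hcdef
  set ε : ℝ := c ^ 2 / (2 * Real.log L) with hεdef
  have hε : 0 < ε := by positivity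
  -- eventual bound from the limit
  obtain ⟨T₁, hT₁⟩ := Filter.eventually_atTop.mp ((Metric.tendsto_nhds.mp hlim) ε hε)
  set T' : ℝ := max (max T T₁) 1 with hT'def
  have hT'1 : (1:ℝ) ≤ T' := le_max_right _ _
  -- the auxiliary function
  set F : ℝ → ℝ := fun t => (Real.log (η t)) ^ 2 - 2 * ε * Real.log t with hFdef
  have hηpos : ∀ t : ℝ, 0 ≤ t → 0 < η t := fun t ht => lt_of_lt_of_le one_pos (hη1 t ht)
  have hderiv : ∀ t : ℝ, T' ≤ t → HasDerivAt F
      (2 * Real.log (η t) * (deriv η t / η t) - 2 * ε * t⁻¹) t := by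
    intro t ht
    have ht0 : 0 < t := lt_of_lt_of_le one_pos (le_trans hT'1 ht)
    have hηd : DifferentiableAt ℝ η t := hT t (le_trans (le_trans (le_max_left _ _) (le_max_left _ _)) ht)
    have hηt : η t ≠ 0 := (hηpos t ht0.le).ne'
    have h1 : HasDerivAt (fun s => Real.log (η s)) (deriv η t / η t) t :=
      (hηd.hasDerivAt).log hηt
    have h2 : HasDerivAt (fun s => (Real.log (η s)) ^ 2)
        (2 * Real.log (η t) * (deriv η t / η t)) t := by
      have := h1.pow 2
      simpa [Pi.pow_def, pow_one, mul_comm, mul_assoc, mul_left_comm] using this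
    have h3 : HasDerivAt (fun s => 2 * ε * Real.log s) (2 * ε * t⁻¹) t :=
      (Real.hasDerivAt_log ht0.ne').const_mul (2 * ε)
    exact h2.sub h3
  have hanti : AntitoneOn F (Set.Ici T') := by
    apply antitoneOn_of_deriv_nonpos (convex_Ici T')
    · intro t ht
      exact ((hderiv t ht).differentiableAt.continuousAt).continuousWithinAt
    · intro t ht
      rw [interior_Ici] at ht
      exact (hderiv t (le_of_lt ht)).differentiableAt.differentiableWithinAt
    · intro t ht
      rw [interior_Ici] at ht
      have ht' : T' ≤ t := le_of_lt ht
      have ht0 : 0 < t := lt_of_lt_of_le one_pos (le_trans hT'1 ht')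
      rw [(hderiv t ht').deriv]
      have hX : |t * deriv η t / η t * Real.log (η t)| < ε := by
        have := hT₁ t (le_trans (le_trans (le_max_right _ _) (le_max_left _ _)) ht')
        rwa [Real.dist_eq, sub_zero] at this
      have hXle : t * deriv η t / η t * Real.log (η t) ≤ ε := (abs_le.mp hX.le).2
      have hkey : t * (2 * Real.log (η t) * (deriv η t / η t)) ≤ 2 * ε := by
        have : t * (2 * Real.log (η t) * (deriv η t / η t))
            = 2 * (t * deriv η t / η t * Real.log (η t)) := by ring
        rw [this]; linarith
      have : 2 * Real.log (η t) * (deriv η t / η t) ≤ 2 * ε / t :=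
        (le_div_iff₀ ht0).mpr (by linarith [hkey])
      have h2e : 2 * ε / t = 2 * ε * t⁻¹ := by rw [div_eq_mul_inv]
      linarith [this, h2e.le, h2e.ge]
  -- choose k₁
  obtain ⟨n, hn⟩ := pow_unbounded_of_one_lt T' hL
  refine ⟨max n 4, le_max_right _ _, ?_⟩
  intro k hk
  have hk4 : 4 ≤ k := le_trans (le_max_right _ _) hk
  have hkn : n ≤ k := le_trans (le_max_left _ _) hk
  have hLk : T' ≤ L ^ k :=
    le_trans hn.le (pow_le_pow_right₀ hL.le hkn)
  have hLk1 : T' ≤ L ^ (k + 1) :=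
    le_trans hLk (pow_le_pow_right₀ hL.le (Nat.le_succ k))
  have hLkpos : (0:ℝ) < L ^ k := pow_pos hL0 k
  have hLk1pos : (0:ℝ) < L ^ (k+1) := pow_pos hL0 (k+1)
  -- apply antitonicity
  have hF : F (L ^ (k+1)) ≤ F (L ^ k) :=
    hanti hLk hLk1 (pow_le_pow_right₀ hL.le (Nat.le_succ k))
  have hlogpow : ∀ m : ℕ, Real.log (L ^ m) = m * Real.log L := fun m => by rw [Real.log_pow]
  set a : ℝ := Real.log (η (L ^ (k+1))) with hadef
  set b : ℝ := Real.log (η (L ^ k)) with hbdef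
  have ha0 : 0 ≤ a := Real.log_nonneg (hη1 _ hLk1pos.le)
  have hb0 : 0 ≤ b := Real.log_nonneg (hη1 _ hLkpos.le)
  have hsq : a ^ 2 ≤ b ^ 2 + c ^ 2 := by
    have hF' : a ^ 2 - 2 * ε * ((k+1 : ℕ) * Real.log L) ≤ b ^ 2 - 2 * ε * ((k : ℕ) * Real.log L) := by
      have := hF
      simp only [hFdef, hlogpow] at this
      convert this using 3 <;> push_cast <;> ring
    have hεeq : 2 * ε * Real.log L = c ^ 2 := by
      rw [hεdef]; field_simp
    push_cast at hF'
    nlinarith [hF', hεeq]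
  have hab : a ≤ b + c := by nlinarith [mul_nonneg hb0 hc.le, sq_nonneg (a - b - c), sq_nonneg (a + b + c)]
  -- exponentiate
  have hstep : η (L ^ (k+1)) ≤ 3/2 * η (L ^ k) := by
    have h1 : η (L ^ (k+1)) = Real.exp a := (Real.exp_log (hηpos _ hLk1pos.le)).symm
    have h2 : η (L ^ k) = Real.exp b := (Real.exp_log (hηpos _ hLkpos.le)).symm
    have h3 : Real.exp a ≤ Real.exp (b + c) := Real.exp_le_exp.mpr hab
    rw [h1, h2]
    calc Real.exp a ≤ Real.exp b * Real.exp c := by rw [← Real.exp_add]; exact h3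
      _ = Real.exp b * (3/2) := by rw [hcdef, Real.exp_log (by norm_num : (0:ℝ) < 3/2)]
      _ = 3/2 * Real.exp b := by ring
  -- final arithmetic
  have hηk1 : 1 ≤ η (L ^ k) := hη1 _ hLkpos.le
  have hkpos : (0:ℝ) < (k:ℝ) := by exact_mod_cast Nat.lt_of_lt_of_le (by norm_num) hk4
  have hk4' : (4:ℝ) ≤ (k:ℝ) := by exact_mod_cast hk4
  have hx : (0:ℝ) < (k:ℝ) * L₂ * (η (L ^ k) + 1) := by positivity
  have hy : (0:ℝ) < ((k:ℝ) + 1) * L₂ * (η (L ^ (k+1)) + 1) := by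
    have : (0:ℝ) < η (L ^ (k+1)) := hηpos _ hLk1pos.le
    positivity
  have heq : (1 / ((k : ℝ) * L₂ * (η (L ^ k) + 1))) /
        (1 / (((k : ℝ) + 1) * L₂ * (η (L ^ (k + 1)) + 1)))
      = (((k : ℝ) + 1) * L₂ * (η (L ^ (k + 1)) + 1)) / ((k : ℝ) * L₂ * (η (L ^ k) + 1)) := by
    field_simp
  rw [heq, div_le_iff₀ hx]
  have h1 : η (L ^ (k+1)) + 1 ≤ 3/2 * (η (L ^ k) + 1) := by linarith
  have h2 : (k:ℝ) + 1 ≤ 4/3 * (k:ℝ) := by linarith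
  have hA : ((k:ℝ)+1) * L₂ ≤ (4/3 * (k:ℝ)) * L₂ := mul_le_mul_of_nonneg_right h2 hL₂.le
  have h0 : (0:ℝ) ≤ η (L ^ (k+1)) + 1 := by linarith [hηpos _ hLk1pos.le]
  have h3 : ((k:ℝ)+1) * L₂ * (η (L ^ (k+1)) + 1) ≤ (4/3 * (k:ℝ) * L₂) * (3/2 * (η (L ^ k) + 1)) :=
    mul_le_mul hA h1 h0 (by positivity)
  calc ((k:ℝ)+1) * L₂ * (η (L ^ (k+1)) + 1) ≤ (4/3 * (k:ℝ) * L₂) * (3/2 * (η (L ^ k) + 1)) := h3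
    _ = 2 * ((k:ℝ) * L₂ * (η (L ^ k) + 1)) := by ring
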